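/- Let K = ℚ(√−7). On the elliptic curve over K defined by y² + ((14 + 3√−7)/7)xy + ((−3 + √−7)/7)y = x³ + ((−3 + √−7)/7)x², the point (0, 0) is a torsion point of order 14. -/

import Mathlib

open WeierstrassCurve Polynomial

private lemma key {K : Type*} [Field K] [Algebra ℚ K] (s : K) (hs : s ^ 2 = -7)
    (p q : ℚ) (hq : q ≠ 0) : (p : K) + (q : K) * s ≠ 0 := by
  haveI : CharZero K := charZero_of_injective_algebraMap (algebraMap ℚ K).injective
  intro h
  have hq' : (q : K) ≠ 0 := by exact_mod_cast hq
  have h1 : s = ((-p / q : ℚ) : K) := by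
    push_cast
    rw [eq_div_iff hq']
    linear_combination h
  have h2 : ((-p / q : ℚ)) ^ 2 = -7 := by
    have h3 := hs
    rw [h1] at h3
    exact_mod_cast h3
  nlinarith [sq_nonneg (-p / q), h2]

private lemma add_eq_some {F : Type*} [Field F] [DecidableEq F] {W : WeierstrassCurve.Affine F}
    {x₁ x₂ y₁ y₂ x₃ y₃ L : F} (h₁ : W.Nonsingular x₁ y₁) (h₂ : W.Nonsingular x₂ y₂)
    (hxy : x₁ = x₂ → y₁ ≠ W.negY x₂ y₂)
    (hL : W.slope x₁ x₂ y₁ y₂ = L)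
    (hx3 : W.addX x₁ x₂ L = x₃) (hy3 : W.addY x₁ x₂ y₁ L = y₃) :
    ∃ h₃ : W.Nonsingular x₃ y₃,
      WeierstrassCurve.Affine.Point.some _ _ h₁ + WeierstrassCurve.Affine.Point.some _ _ h₂ =
        WeierstrassCurve.Affine.Point.some _ _ h₃ := by
  subst hL hx3 hy3
  exact ⟨_, WeierstrassCurve.Affine.Point.add_some fun h => hxy h.1 h.2⟩

open Classical in
/-- K = ℚ(√(-7)); the given point is a torsion point of order 14. -/
theorem stmt_10 {K : Type*} [Field K] [Algebra ℚ K] (s : K) (hs : s ^ 2 = -7)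
    (hK : ∀ x : K, ∃ a b : ℚ, x = algebraMap ℚ K a + algebraMap ℚ K b * s) :
    ∃ h : WeierstrassCurve.Affine.Nonsingular (⟨(14 + 3 * s) / 7, (-3 + s) / 7, (-3 + s) / 7, 0, 0⟩ : WeierstrassCurve.Affine K) (0) (0),
      addOrderOf (WeierstrassCurve.Affine.Point.some _ _ h) = 14 := by
  haveI : CharZero K := charZero_of_injective_algebraMap (algebraMap ℚ K).injective
  set W : WeierstrassCurve.Affine K := ⟨(14 + 3 * s) / 7, (-3 + s) / 7, (-3 + s) / 7, 0, 0⟩ with hW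
  have ha₁ : W.a₁ = (14 + 3 * s) / 7 := by rw [hW]
  have ha₂ : W.a₂ = (-3 + s) / 7 := by rw [hW]
  have ha₃ : W.a₃ = (-3 + s) / 7 := by rw [hW]
  have ha₄ : W.a₄ = 0 := by rw [hW]
  have ha₆ : W.a₆ = 0 := by rw [hW]
  have hP : W.Nonsingular (0 : K) (0 : K) := by
    rw [Affine.nonsingular_iff, Affine.equation_iff]
    constructor
    · simp only [ha₁, ha₂, ha₃, ha₄, ha₆]; ring
    · right
      simp only [ha₁, ha₃]
      exact fun h => key s hs (-3/7) (1/7) (by norm_num) (by push_cast; linear_combination h)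
  have hneg2 : W.negY (0 : K) (0 : K) = ((3/7) + (-1/7) * s) := by
    simp only [Affine.negY, ha₁, ha₂, ha₃, ha₄, ha₆]
    linear_combination ((0)) * hs
  have hy2 : (0 : K) ≠ W.negY (0 : K) (0 : K) := by
    rw [hneg2]
    exact fun h => key s hs (-3/7) (1/7) (by norm_num) (by push_cast; linear_combination h)
  have hL2 : W.slope (0 : K) (0 : K) (0 : K) (0 : K) = (0 : K) := by
    rw [Affine.slope_of_Y_ne rfl hy2, div_eq_iff (sub_ne_zero.mpr hy2)]
    simp only [Affine.negY, ha₁, ha₂, ha₃, ha₄, ha₆]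
    linear_combination ((0)) * hs
  have hX2 : W.addX (0 : K) (0 : K) (0 : K) = ((3/7) + (-1/7) * s) := by
    simp only [Affine.addX, ha₁, ha₂, ha₃, ha₄, ha₆]
    linear_combination ((0)) * hs
  have hY2 : W.addY (0 : K) (0 : K) (0 : K) (0 : K) = ((-6/7) + (-2/49) * s) := by
    simp only [Affine.addY, Affine.negAddY, Affine.addX, Affine.negY, ha₁, ha₂, ha₃, ha₄, ha₆]
    linear_combination ((3/49)) * hs
  obtain ⟨h2, e2⟩ := add_eq_some hP hP (fun _ => hy2) hL2 hX2 hY2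
  have hx3 : ((3/7) + (-1/7) * s) ≠ (0 : K) := fun h => key s hs (3/7) (-1/7) (by norm_num) (by push_cast; linear_combination h)
  have hL3 : W.slope ((3/7) + (-1/7) * s) (0 : K) ((-6/7) + (-2/49) * s) (0 : K) = ((-1) + (-3/7) * s) := by
    rw [Affine.slope_of_X_ne hx3, div_eq_iff (sub_ne_zero.mpr (fun h => hx3 h))]
    linear_combination ((-3/49)) * hs
  have hX3 : W.addX ((3/7) + (-1/7) * s) (0 : K) ((-1) + (-3/7) * s) = ((-1) + (-3/7) * s) := by
    simp only [Affine.addX, ha₁, ha₂, ha₃, ha₄, ha₆]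
    linear_combination ((0)) * hs
  have hY3 : W.addY ((3/7) + (-1/7) * s) (0 : K) ((-6/7) + (-2/49) * s) ((-1) + (-3/7) * s) = ((10/7) + (2/7) * s) := by
    simp only [Affine.addY, Affine.negAddY, Affine.addX, Affine.negY, ha₁, ha₂, ha₃, ha₄, ha₆]
    linear_combination ((3/49)) * hs
  obtain ⟨h3, e3⟩ := add_eq_some h2 hP (fun h => absurd h hx3) hL3 hX3 hY3
  have hneg4 : W.negY ((3/7) + (-1/7) * s) ((-6/7) + (-2/49) * s) = (0 : K) := by
    simp only [Affine.negY, ha₁, ha₂, ha₃, ha₄, ha₆]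
    linear_combination ((3/49)) * hs
  have hy4 : ((-6/7) + (-2/49) * s) ≠ W.negY ((3/7) + (-1/7) * s) ((-6/7) + (-2/49) * s) := by
    rw [hneg4]
    exact fun h => key s hs (-6/7) (-2/49) (by norm_num) (by push_cast; linear_combination h)
  have hL4 : W.slope ((3/7) + (-1/7) * s) ((3/7) + (-1/7) * s) ((-6/7) + (-2/49) * s) ((-6/7) + (-2/49) * s) = ((-2) + (-2/7) * s) := by
    rw [Affine.slope_of_Y_ne rfl hy4, div_eq_iff (sub_ne_zero.mpr hy4)]
    simp only [Affine.negY, ha₁, ha₂, ha₃, ha₄, ha₆]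
    linear_combination ((-33/343) + (-6/343) * s) * hs
  have hX4 : W.addX ((3/7) + (-1/7) * s) ((3/7) + (-1/7) * s) ((-2) + (-2/7) * s) = ((-1/7) + (-1/7) * s) := by
    simp only [Affine.addX, ha₁, ha₂, ha₃, ha₄, ha₆]
    linear_combination ((-2/49)) * hs
  have hY4 : W.addY ((3/7) + (-1/7) * s) ((3/7) + (-1/7) * s) ((-6/7) + (-2/49) * s) ((-2) + (-2/7) * s) = ((0) + (4/49) * s) := by
    simp only [Affine.addY, Affine.negAddY, Affine.addX, Affine.negY, ha₁, ha₂, ha₃, ha₄, ha₆]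
    linear_combination ((3/49) + (2/343) * s) * hs
  obtain ⟨h4, e4⟩ := add_eq_some h2 h2 (fun _ => hy4) hL4 hX4 hY4
  have hx7 : ((-1/7) + (-1/7) * s) ≠ ((-1) + (-3/7) * s) := fun h => key s hs (6/7) (2/7) (by norm_num) (by push_cast; linear_combination h)
  have hL7 : W.slope ((-1/7) + (-1/7) * s) ((-1) + (-3/7) * s) ((0) + (4/49) * s) ((10/7) + (2/7) * s) = ((-5/4) + (5/28) * s) := by
    rw [Affine.slope_of_X_ne hx7, div_eq_iff (sub_ne_zero.mpr (fun h => hx7 h))]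
    linear_combination ((-5/98)) * hs
  have hX7 : W.addX ((-1/7) + (-1/7) * s) ((-1) + (-3/7) * s) ((-5/4) + (5/28) * s) = ((-1/8) + (-11/56) * s) := by
    simp only [Affine.addX, ha₁, ha₂, ha₃, ha₄, ha₆]
    linear_combination ((85/784)) * hs
  have hY7 : W.addY ((-1/7) + (-1/7) * s) ((-1) + (-3/7) * s) ((0) + (4/49) * s) ((-5/4) + (5/28) * s) = ((5/112) + (17/112) * s) := by
    simp only [Affine.addY, Affine.negAddY, Affine.addX, Affine.negY, ha₁, ha₂, ha₃, ha₄, ha₆]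
    linear_combination ((39/3136) + (-1445/21952) * s) * hs
  obtain ⟨h7, e7⟩ := add_eq_some h4 h3 (fun h => absurd h hx7) hL7 hX7 hY7
  have hneg7' : W.negY ((-1/8) + (-11/56) * s) ((5/112) + (17/112) * s) = ((5/112) + (17/112) * s) := by
    simp only [Affine.negY, ha₁, ha₂, ha₃, ha₄, ha₆]
    linear_combination ((33/392)) * hs
  have e14 : WeierstrassCurve.Affine.Point.some _ _ h7 + WeierstrassCurve.Affine.Point.some _ _ h7 = 0 :=
    WeierstrassCurve.Affine.Point.add_of_Y_eq rfl (by rw [hneg7'])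
  refine ⟨hP, ?_⟩
  set Pt := WeierstrassCurve.Affine.Point.some _ _ hP with hPt
  have n2 : (2 : ℕ) • Pt = WeierstrassCurve.Affine.Point.some _ _ h2 := by
    rw [two_nsmul, hPt, e2]
  have n3 : (3 : ℕ) • Pt = WeierstrassCurve.Affine.Point.some _ _ h3 := by
    rw [show (3 : ℕ) = 2 + 1 from rfl, add_nsmul, n2, one_nsmul, hPt, e3]
  have n4 : (4 : ℕ) • Pt = WeierstrassCurve.Affine.Point.some _ _ h4 := by
    rw [show (4 : ℕ) = 2 + 2 from rfl, add_nsmul, n2, e4]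
  have n7 : (7 : ℕ) • Pt = WeierstrassCurve.Affine.Point.some _ _ h7 := by
    rw [show (7 : ℕ) • Pt = (4 + 3 : ℕ) • Pt from rfl, add_nsmul, n4, n3, e7]
  have n14 : (14 : ℕ) • Pt = 0 := by
    rw [show (14 : ℕ) = 7 + 7 from rfl, add_nsmul, n7, e14]
  refine addOrderOf_eq_of_nsmul_and_div_prime_nsmul (by norm_num) n14 ?_
  intro p pp pd
  have hor : p = 2 ∨ p = 7 := by
    have hb1 := pp.two_le
    have hb2 := Nat.le_of_dvd (by norm_num) pd
    interval_cases p <;> revert pp pd <;> decide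
  rcases hor with h | h <;> subst h
  · intro hcon
    rw [show ((14 : ℕ) / 2) = 7 from rfl, n7] at hcon
    exact WeierstrassCurve.Affine.Point.some_ne_zero _ hcon
  · intro hcon
    rw [show ((14 : ℕ) / 7) = 2 from rfl, n2] at hcon
    exact WeierstrassCurve.Affine.Point.some_ne_zero _ hcon
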